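/- For any n ∈ ℕ and q ∈ [0,1], the total variation distance between the Binomial(n, q) distribution and the Poisson(nq) distribution is at most min(q, nq²). -/

import Mathlib

open Finset

namespace SteinChen

noncomputable def u (l : ℝ) (k : ℕ) : ℝ := l ^ k / k.factorial
noncomputable def T (l : ℝ) (m : ℕ) : ℝ := ∑ k ∈ range m, u l k
noncomputable def R (l : ℝ) (m : ℕ) : ℝ := ∑' k : ℕ, u l (k + m)
noncomputable def c (l : ℝ) (m : ℕ) : ℝ := m.factorial / l ^ (m + 1)
noncomputable def G (l : ℝ) (m : ℕ) : ℝ := c l m * R l (m + 1)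
noncomputable def H (l : ℝ) (m : ℕ) : ℝ := c l m * T l (m + 1)

noncomputable def iu (l : ℝ) (A : Finset ℕ) (k : ℕ) : ℝ := if k ∈ A then u l k else 0
noncomputable def SA (l : ℝ) (A : Finset ℕ) (m : ℕ) : ℝ := ∑ k ∈ range m, iu l A k
noncomputable def RA (l : ℝ) (A : Finset ℕ) (m : ℕ) : ℝ := ∑' k : ℕ, iu l A (k + m)

noncomputable def f (l : ℝ) (A : Finset ℕ) : ℕ → ℝ
  | 0 => 0
  | m + 1 => c l m * (SA l A (m + 1) - Real.exp (-l) * RA l A 0 * T l (m + 1))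

variable {l : ℝ} {A : Finset ℕ}

lemma u_nonneg (hl : 0 ≤ l) (k : ℕ) : 0 ≤ u l k := by
  unfold u; positivity

lemma summable_u (l : ℝ) : Summable (u l) := Real.summable_pow_div_factorial l

lemma summable_u_add (l : ℝ) (m : ℕ) : Summable (fun k => u l (k + m)) :=
  (summable_nat_add_iff m).mpr (summable_u l)

lemma iu_nonneg (hl : 0 ≤ l) (k : ℕ) : 0 ≤ iu l A k := by
  unfold iu; split_ifs
  · exact u_nonneg hl k
  · exact le_rfl

lemma iu_le_u (hl : 0 ≤ l) (k : ℕ) : iu l A k ≤ u l k := by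
  unfold iu; split_ifs
  · exact le_rfl
  · exact u_nonneg hl k

lemma summable_iu (hl : 0 ≤ l) (A : Finset ℕ) : Summable (iu l A) :=
  Summable.of_nonneg_of_le (iu_nonneg hl) (iu_le_u hl) (summable_u l)

lemma summable_iu_add (hl : 0 ≤ l) (A : Finset ℕ) (m : ℕ) :
    Summable (fun k => iu l A (k + m)) :=
  (summable_nat_add_iff m).mpr (summable_iu hl A)

lemma exp_tsum (l : ℝ) : Real.exp l = ∑' k : ℕ, u l k := by
  rw [Real.exp_eq_exp_ℝ, NormedSpace.exp_eq_tsum_div]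
  rfl

lemma T_add_R (l : ℝ) (m : ℕ) : T l m + R l m = Real.exp l := by
  rw [exp_tsum]
  exact Summable.sum_add_tsum_nat_add m (summable_u l)

lemma SA_add_RA (hl : 0 ≤ l) (A : Finset ℕ) (m : ℕ) : SA l A m + RA l A m = RA l A 0 := by
  have h := Summable.sum_add_tsum_nat_add (f := iu l A) m (summable_iu hl A)
  unfold SA RA
  simpa using h

lemma R_succ (l : ℝ) (m : ℕ) : R l m = u l m + R l (m + 1) := by
  unfold R
  rw [Summable.tsum_eq_zero_add (summable_u_add l m)]
  congr 1
  · simp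
  · exact tsum_congr fun k => by rw [show k + 1 + m = k + (m + 1) by omega]

lemma RA_succ (hl : 0 ≤ l) (A : Finset ℕ) (m : ℕ) :
    RA l A m = iu l A m + RA l A (m + 1) := by
  unfold RA
  rw [Summable.tsum_eq_zero_add (summable_iu_add hl A m)]
  congr 1
  · simp
  · exact tsum_congr fun k => by rw [show k + 1 + m = k + (m + 1) by omega]

lemma T_succ (l : ℝ) (m : ℕ) : T l (m + 1) = T l m + u l m := sum_range_succ _ m

lemma R_nonneg (hl : 0 ≤ l) (m : ℕ) : 0 ≤ R l m :=
  tsum_nonneg fun k => u_nonneg hl _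

lemma T_nonneg (hl : 0 ≤ l) (m : ℕ) : 0 ≤ T l m :=
  Finset.sum_nonneg fun k _ => u_nonneg hl k

lemma c_pos (hl : 0 < l) (m : ℕ) : 0 < c l m := by
  unfold c; positivity

lemma SA_nonneg (hl : 0 ≤ l) (m : ℕ) : 0 ≤ SA l A m :=
  Finset.sum_nonneg fun k _ => iu_nonneg hl k

lemma RA_nonneg (hl : 0 ≤ l) (m : ℕ) : 0 ≤ RA l A m :=
  tsum_nonneg fun k => iu_nonneg hl _

lemma SA_le_T (hl : 0 ≤ l) (m : ℕ) : SA l A m ≤ T l m :=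
  Finset.sum_le_sum fun k _ => iu_le_u hl k

lemma RA_le_R (hl : 0 ≤ l) (m : ℕ) : RA l A m ≤ R l m :=
  Summable.tsum_le_tsum (fun k => iu_le_u hl _) (summable_iu_add hl A m) (summable_u_add l m)


lemma f_mixed (hl : 0 < l) (A : Finset ℕ) (m : ℕ) :
    f l A (m + 1) =
      Real.exp (-l) * (c l m *
        (SA l A (m + 1) * R l (m + 1) - T l (m + 1) * RA l A (m + 1))) := by
  have h1 : RA l A 0 = SA l A (m + 1) + RA l A (m + 1) := (SA_add_RA hl.le A (m + 1)).symm
  have h2 : T l (m + 1) + R l (m + 1) = Real.exp l := T_add_R l (m + 1)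
  have h3 : Real.exp (-l) * Real.exp l = 1 := by
    rw [← Real.exp_add]; simp
  have aux : Real.exp (-l) * T l (m + 1) + Real.exp (-l) * R l (m + 1) = 1 := by
    rw [← mul_add, h2, h3]
  show c l m * (SA l A (m + 1) - Real.exp (-l) * RA l A 0 * T l (m + 1)) = _
  rw [h1]
  linear_combination (-(c l m * SA l A (m + 1))) * aux

lemma iu_eq (l : ℝ) (A : Finset ℕ) (k : ℕ) :
    iu l A k = (if k ∈ A then (1 : ℝ) else 0) * u l k := by
  unfold iu; split_ifs <;> simp

lemma stein_eq (hl : 0 < l) (A : Finset ℕ) (j : ℕ) :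
    l * f l A (j + 1) - j * f l A j =
      (if j ∈ A then (1 : ℝ) else 0) - Real.exp (-l) * RA l A 0 := by
  have hl' := hl.ne'
  cases j with
  | zero =>
    simp only [f, Nat.cast_zero, zero_mul, sub_zero]
    have hSA : SA l A 1 = iu l A 0 := by unfold SA; simp
    have hT : T l 1 = u l 0 := by unfold T; simp
    have hu0 : u l 0 = 1 := by simp [u]
    have hc0 : c l 0 = 1 / l := by simp [c]
    rw [hSA, hT, hu0, hc0, iu_eq, hu0]
    field_simp
  | succ t =>
    show l * (c l (t + 1) * (SA l A (t + 2) - Real.exp (-l) * RA l A 0 * T l (t + 2))) -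
        (t + 1 : ℕ) * (c l t * (SA l A (t + 1) - Real.exp (-l) * RA l A 0 * T l (t + 1))) = _
    have e1 : l * c l (t + 1) = ((t : ℝ) + 1) * c l t := by
      unfold c
      rw [Nat.factorial_succ]
      push_cast
      field_simp
      ring
    have e2 : l * c l (t + 1) * u l (t + 1) = 1 := by
      unfold c u
      field_simp
      ring
    have hSA : SA l A (t + 2) = SA l A (t + 1) + iu l A (t + 1) := sum_range_succ _ _
    have hT : T l (t + 2) = T l (t + 1) + u l (t + 1) := sum_range_succ _ _
    rw [hSA, hT, iu_eq]
    push_cast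
    set I := (if t + 1 ∈ A then (1 : ℝ) else 0)
    set P := Real.exp (-l) * RA l A 0
    linear_combination (SA l A (t + 1) - P * T l (t + 1)) * e1 + (I - P) * e2


lemma G_eq (hl : 0 < l) (m : ℕ) :
    G l m = ∑' k : ℕ, l ^ k * ((m.factorial : ℝ) / (k + m + 1).factorial) := by
  unfold G R c
  rw [← tsum_mul_left]
  refine tsum_congr fun k => ?_
  unfold u
  have h : l ^ (k + (m + 1)) = l ^ k * l ^ (m + 1) := by rw [pow_add]
  rw [show k + (m + 1) = k + m + 1 by omega] at h ⊢
  rw [h]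
  have h2 : (l : ℝ) ^ (m + 1) ≠ 0 := pow_ne_zero _ hl.ne'
  field_simp

lemma summable_G_term (hl : 0 < l) (m : ℕ) :
    Summable (fun k : ℕ => l ^ k * ((m.factorial : ℝ) / (k + m + 1).factorial)) := by
  have hle : ∀ k : ℕ, l ^ k * ((m.factorial : ℝ) / (k + m + 1).factorial) ≤
      (m.factorial : ℝ) * (l ^ k / k.factorial) := by
    intro k
    have hfle : (k.factorial : ℝ) ≤ ((k + m + 1).factorial : ℝ) := by
      exact_mod_cast Nat.factorial_le (by omega)
    have h1 : (m.factorial : ℝ) / (k + m + 1).factorial ≤ (m.factorial : ℝ) / k.factorial := by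
      apply div_le_div_of_nonneg_left _ (by positivity) hfle
      positivity
    calc l ^ k * ((m.factorial : ℝ) / (k + m + 1).factorial)
        ≤ l ^ k * ((m.factorial : ℝ) / k.factorial) :=
          mul_le_mul_of_nonneg_left h1 (by positivity)
      _ = (m.factorial : ℝ) * (l ^ k / k.factorial) := by ring
  have hnn : ∀ k : ℕ, 0 ≤ l ^ k * ((m.factorial : ℝ) / (k + m + 1).factorial) := by
    intro k; positivity
  exact Summable.of_nonneg_of_le hnn hle ((Real.summable_pow_div_factorial l).mul_left _)

lemma G_anti (hl : 0 < l) (m : ℕ) : G l (m + 1) ≤ G l m := by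
  rw [G_eq hl, G_eq hl]
  apply Summable.tsum_le_tsum _ (summable_G_term hl (m + 1)) (summable_G_term hl m)
  intro k
  apply mul_le_mul_of_nonneg_left _ (by positivity)
  rw [div_le_div_iff₀ (by positivity) (by positivity)]
  have hnat : (m + 1).factorial * (k + m + 1).factorial ≤
      m.factorial * (k + (m + 1) + 1).factorial := by
    have h1 : (m + 1).factorial * (k + m + 1).factorial
        = (m + 1) * (m.factorial * (k + m + 1).factorial) := by
      rw [Nat.factorial_succ]; ring
    have h2 : m.factorial * (k + (m + 1) + 1).factorial
        = (k + m + 2) * (m.factorial * (k + m + 1).factorial) := by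
      rw [show k + (m + 1) + 1 = (k + m + 1) + 1 by omega, Nat.factorial_succ]; ring
    rw [h1, h2]
    exact Nat.mul_le_mul_right _ (by omega)
  exact_mod_cast hnat

lemma H_eq (hl : 0 < l) (m : ℕ) :
    H l m = ∑ d ∈ range (m + 1), (m.descFactorial d : ℝ) / l ^ (d + 1) := by
  unfold H T c
  rw [Finset.mul_sum, ← Finset.sum_range_reflect]
  refine Finset.sum_congr rfl fun d hd => ?_
  have hdm : d ≤ m := by simp at hd; omega
  unfold u
  have hfac : ((m - d).factorial : ℝ) * (m.descFactorial d : ℝ) = m.factorial := by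
    exact_mod_cast congrArg (Nat.cast (R := ℝ)) (Nat.factorial_mul_descFactorial hdm)
  have hpow : l ^ (m + 1) = l ^ (m - d) * l ^ (d + 1) := by
    rw [← pow_add]; congr 1; omega
  rw [show m + 1 - 1 - d = m - d by omega, hpow]
  have h1 : (l : ℝ) ^ (m - d) ≠ 0 := pow_ne_zero _ hl.ne'
  have h2 : (l : ℝ) ^ (d + 1) ≠ 0 := pow_ne_zero _ hl.ne'
  have h3 : ((m - d).factorial : ℝ) ≠ 0 := by positivity
  field_simp
  linear_combination (-1) * hfac

lemma H_mono (hl : 0 < l) (m : ℕ) : H l m ≤ H l (m + 1) := by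
  rw [H_eq hl, H_eq hl]
  calc ∑ d ∈ range (m + 1), (m.descFactorial d : ℝ) / l ^ (d + 1)
      ≤ ∑ d ∈ range (m + 1), ((m + 1).descFactorial d : ℝ) / l ^ (d + 1) := by
        apply Finset.sum_le_sum
        intro d _
        apply div_le_div_of_nonneg_right _ (by positivity)
        exact_mod_cast Nat.descFactorial_le d (Nat.le_succ m)
    _ ≤ ∑ d ∈ range (m + 2), ((m + 1).descFactorial d : ℝ) / l ^ (d + 1) := by
        apply Finset.sum_le_sum_of_subset_of_nonneg
        · exact Finset.range_subset_range.mpr (by omega)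
        · intro d _ _; positivity

lemma G_nonneg (hl : 0 < l) (m : ℕ) : 0 ≤ G l m :=
  mul_nonneg (c_pos hl m).le (R_nonneg hl.le _)

lemma H_nonneg (hl : 0 < l) (m : ℕ) : 0 ≤ H l m :=
  mul_nonneg (c_pos hl m).le (T_nonneg hl.le _)


lemma summable_shift_fac (hl : 0 < l) : Summable (fun k : ℕ => l ^ k / ((k + 1).factorial : ℝ)) := by
  have hle : ∀ k : ℕ, l ^ k / ((k + 1).factorial : ℝ) ≤ l ^ k / (k.factorial : ℝ) := by
    intro k
    apply div_le_div_of_nonneg_left (by positivity) (by positivity)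
    exact_mod_cast Nat.factorial_le (Nat.le_succ k)
  exact Summable.of_nonneg_of_le (fun k => by positivity) hle (Real.summable_pow_div_factorial l)

lemma exp_sub_one_div (hl : 0 < l) :
    (Real.exp l - 1) / l = ∑' k : ℕ, l ^ k / ((k + 1).factorial : ℝ) := by
  have h1 : Real.exp l = 1 + l * ∑' k : ℕ, l ^ k / ((k + 1).factorial : ℝ) := by
    rw [exp_tsum, Summable.tsum_eq_zero_add (summable_u l)]
    congr 1
    · simp [u]
    · rw [← tsum_mul_left]
      refine tsum_congr fun k => ?_
      unfold u
      rw [pow_succ]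
      ring
  rw [h1]
  field_simp
  ring

lemma uG_eq (hl : 0 < l) (t : ℕ) :
    u l (t + 1) * G l (t + 1) = ∑' k : ℕ, l ^ (k + (t + 1)) / (((k + (t + 1)) + 1).factorial : ℝ) := by
  rw [G_eq hl]
  rw [← tsum_mul_left]
  refine tsum_congr fun k => ?_
  unfold u
  have hfac : (((t + 1).factorial : ℝ)) ≠ 0 := by positivity
  rw [show k + (t + 1) + 1 = k + (t + 1) + 1 from rfl]
  have : l ^ (k + (t + 1)) = l ^ (t + 1) * l ^ k := by rw [← pow_add]; congr 1; omega
  rw [this]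
  field_simp

lemma uH_le (hl : 0 < l) (t : ℕ) :
    u l (t + 1) * H l t ≤ ∑ k ∈ range (t + 1), l ^ k / (((k + 1).factorial : ℝ)) := by
  have hrw : u l (t + 1) * H l t = ∑ k ∈ range (t + 1), u l (t + 1) * (c l t * u l k) := by
    unfold H T
    rw [Finset.mul_sum, Finset.mul_sum]
  rw [hrw]
  apply Finset.sum_le_sum
  intro k hk
  have hkt : k ≤ t := by simp at hk; omega
  have heq : u l (t + 1) * (c l t * u l k) = l ^ k / ((t + 1) * k.factorial : ℝ) := by
    unfold u c
    have h1 : l ^ (t + 1) ≠ 0 := pow_ne_zero _ hl.ne'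
    rw [Nat.factorial_succ]
    push_cast
    field_simp
  rw [heq]
  apply div_le_div_of_nonneg_left (by positivity) (by positivity)
  rw [Nat.factorial_succ]
  push_cast
  have h2 : (1 : ℝ) ≤ k.factorial := by
    exact_mod_cast Nat.one_le_iff_ne_zero.mpr (Nat.factorial_pos k).ne'
  have h3 : (k : ℝ) ≤ t := by exact_mod_cast hkt
  nlinarith [Nat.cast_nonneg (α := ℝ) k.factorial]

lemma key_bound (hl : 0 < l) (t : ℕ) :
    u l (t + 1) * (G l (t + 1) + H l t) ≤ (Real.exp l - 1) / l := by
  rw [exp_sub_one_div hl,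
    ← Summable.sum_add_tsum_nat_add (f := fun k : ℕ => l ^ k / ((k + 1).factorial : ℝ)) (t + 1)
      (summable_shift_fac hl)]
  rw [mul_add, uG_eq hl t]
  have := uH_le hl t
  linarith

lemma stein_identity (hl : 0 < l) (t : ℕ) :
    T l (t + 1) * (G l t - G l (t + 1)) + R l (t + 2) * (H l (t + 1) - H l t) =
      u l (t + 1) * (G l (t + 1) + H l t) := by
  unfold G H
  rw [R_succ l (t + 1), T_succ l (t + 1)]
  ring

lemma delta_eq (hl : 0 < l) (A : Finset ℕ) (t : ℕ) :
    f l A (t + 2) - f l A (t + 1) =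
      Real.exp (-l) * (SA l A (t + 1) * (G l (t + 1) - G l t)
        - RA l A (t + 2) * (H l (t + 1) - H l t)
        + iu l A (t + 1) * (G l (t + 1) + H l t)) := by
  have ht2 : t + 2 = t + 1 + 1 := rfl
  have h1 : SA l A (t + 2) = SA l A (t + 1) + iu l A (t + 1) := sum_range_succ _ _
  have h2 : RA l A (t + 1) = iu l A (t + 1) + RA l A (t + 2) := RA_succ hl.le A (t + 1)
  have h3 : R l (t + 1) = u l (t + 1) + R l (t + 2) := R_succ l (t + 1)
  have h4 : T l (t + 2) = T l (t + 1) + u l (t + 1) := T_succ l (t + 1)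
  rw [ht2, f_mixed hl A (t + 1), f_mixed hl A t]
  unfold G H
  rw [← ht2, h1, h2, h3, h4]
  ring

lemma delta_bound (hl : 0 < l) (A : Finset ℕ) (t : ℕ) :
    |f l A (t + 2) - f l A (t + 1)| ≤ (1 - Real.exp (-l)) / l := by
  have hK : 0 ≤ G l (t + 1) + H l t := add_nonneg (G_nonneg hl _) (H_nonneg hl _)
  have hGd : G l (t + 1) - G l t ≤ 0 := sub_nonpos.mpr (G_anti hl t)
  have hHd : 0 ≤ H l (t + 1) - H l t := sub_nonneg.mpr (H_mono hl t)
  set X := SA l A (t + 1) * (G l (t + 1) - G l t) - RA l A (t + 2) * (H l (t + 1) - H l t)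
    + iu l A (t + 1) * (G l (t + 1) + H l t) with hX
  have hXupper : X ≤ u l (t + 1) * (G l (t + 1) + H l t) := by
    have t1 : SA l A (t + 1) * (G l (t + 1) - G l t) ≤ 0 :=
      mul_nonpos_of_nonneg_of_nonpos (SA_nonneg hl.le _) hGd
    have t2 : 0 ≤ RA l A (t + 2) * (H l (t + 1) - H l t) :=
      mul_nonneg (RA_nonneg hl.le _) hHd
    have t3 : iu l A (t + 1) * (G l (t + 1) + H l t) ≤ u l (t + 1) * (G l (t + 1) + H l t) :=
      mul_le_mul_of_nonneg_right (iu_le_u hl.le _) hK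
    rw [hX]; linarith
  have hXlower : -(u l (t + 1) * (G l (t + 1) + H l t)) ≤ X := by
    have t1 : T l (t + 1) * (G l (t + 1) - G l t) ≤ SA l A (t + 1) * (G l (t + 1) - G l t) := by
      apply mul_le_mul_of_nonpos_right (SA_le_T hl.le _) hGd
    have t2 : RA l A (t + 2) * (H l (t + 1) - H l t) ≤ R l (t + 2) * (H l (t + 1) - H l t) :=
      mul_le_mul_of_nonneg_right (RA_le_R hl.le _) hHd
    have t3 : 0 ≤ iu l A (t + 1) * (G l (t + 1) + H l t) :=
      mul_nonneg (iu_nonneg hl.le _) hK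
    have hid := stein_identity hl t
    rw [hX]
    nlinarith [hid]
  have hXabs : |X| ≤ (Real.exp l - 1) / l := by
    rw [abs_le]
    constructor
    · calc -((Real.exp l - 1) / l) ≤ -(u l (t + 1) * (G l (t + 1) + H l t)) := by
            linarith [key_bound hl t]
        _ ≤ X := hXlower
    · exact hXupper.trans (key_bound hl t)
  rw [delta_eq hl A t, abs_mul, abs_of_pos (Real.exp_pos _)]
  calc Real.exp (-l) * |X| ≤ Real.exp (-l) * ((Real.exp l - 1) / l) := by
        apply mul_le_mul_of_nonneg_left hXabs (Real.exp_pos _).le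
    _ = (1 - Real.exp (-l)) / l := by
        rw [Real.exp_neg]
        have := Real.exp_pos l
        field_simp


noncomputable def bp (ν : ℕ) (q : ℝ) (k : ℕ) : ℝ :=
  if k ≤ ν then (ν.choose k : ℝ) * q ^ k * (1 - q) ^ (ν - k) else 0

lemma bp_nonneg {q : ℝ} (hq0 : 0 ≤ q) (hq1 : q ≤ 1) (ν k : ℕ) : 0 ≤ bp ν q k := by
  unfold bp
  split_ifs
  · have h1 : (0:ℝ) ≤ 1 - q := by linarith
    positivity
  · exact le_rfl

lemma bp_sum (q : ℝ) (ν : ℕ) : ∑ k ∈ range (ν + 1), bp ν q k = 1 := by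
  have h := add_pow q (1 - q) ν
  rw [show q + (1 - q) = 1 by ring, one_pow] at h
  rw [show (1:ℝ) = ∑ k ∈ range (ν + 1), q ^ k * (1 - q) ^ (ν - k) * (ν.choose k : ℝ) from h]
  refine Finset.sum_congr rfl fun k hk => ?_
  have hk' : k ≤ ν := by simp at hk; omega
  unfold bp
  rw [if_pos hk']
  ring

lemma pascal_bp (q : ℝ) (m j : ℕ) :
    bp (m + 1) q (j + 1) = q * bp m q j + (1 - q) * bp m q (j + 1) := by
  unfold bp
  by_cases hj : j ≤ m
  · rw [if_pos (by omega : j + 1 ≤ m + 1), if_pos hj]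
    by_cases hj1 : j + 1 ≤ m
    · rw [if_pos hj1]
      have e1 : m + 1 - (j + 1) = m - j := by omega
      have e2 : m - j = (m - (j + 1)) + 1 := by omega
      rw [e1, e2, Nat.choose_succ_succ' m j, pow_succ]
      push_cast
      ring
    · rw [if_neg hj1]
      have hjm : j = m := by omega
      subst hjm
      rw [show j + 1 - (j + 1) = 0 by omega, show j - j = 0 by omega,
        Nat.choose_succ_succ' j j, Nat.choose_eq_zero_of_lt (Nat.lt_succ_self j)]
      push_cast
      ring
  · rw [if_neg (by omega), if_neg hj, if_neg (by omega)]
    ring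

lemma mul_bp (q : ℝ) (m j : ℕ) (hj : j ≤ m) :
    ((j : ℝ) + 1) * bp (m + 1) q (j + 1) = ((m : ℝ) + 1) * q * bp m q j := by
  unfold bp
  rw [if_pos (by omega : j + 1 ≤ m + 1), if_pos hj]
  have e1 : m + 1 - (j + 1) = m - j := by omega
  have hch : (m + 1) * m.choose j = (m + 1).choose (j + 1) * (j + 1) :=
    Nat.add_one_mul_choose_eq m j
  have hch' : ((m : ℝ) + 1) * (m.choose j : ℝ) = ((m + 1).choose (j + 1) : ℝ) * ((j : ℝ) + 1) := by
    exact_mod_cast hch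
  rw [e1]
  linear_combination (-(q ^ j * q * (1 - q) ^ (m - j))) * hch'

lemma claimA (q : ℝ) (m : ℕ) (F : ℕ → ℝ) :
    ∑ k ∈ range (m + 2), bp (m + 1) q k * ((k : ℝ) * F k)
      = ((m : ℝ) + 1) * q * ∑ j ∈ range (m + 1), bp m q j * F (j + 1) := by
  rw [show m + 2 = m + 1 + 1 from rfl, Finset.sum_range_succ' _ (m + 1)]
  simp only [Nat.cast_zero, zero_mul, mul_zero, add_zero]
  rw [Finset.mul_sum]
  refine Finset.sum_congr rfl fun j hj => ?_
  have hjm : j ≤ m := by simp at hj; omega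
  have h := mul_bp q m j hjm
  push_cast
  linear_combination F (j + 1) * h

lemma claimB (q : ℝ) (m : ℕ) (F : ℕ → ℝ) :
    ∑ k ∈ range (m + 2), bp (m + 1) q k * F (k + 1)
      = q * ∑ j ∈ range (m + 1), bp m q j * F (j + 2)
        + (1 - q) * ∑ j ∈ range (m + 1), bp m q j * F (j + 1) := by
  have hre : ∀ j : ℕ, j + 1 + 1 = j + 2 := fun j => rfl
  rw [show m + 2 = m + 1 + 1 from rfl, Finset.sum_range_succ' _ (m + 1)]
  have hsplit : ∀ j ∈ range (m + 1), bp (m + 1) q (j + 1) * F (j + 1 + 1) =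
      q * (bp m q j * F (j + 2)) + (1 - q) * (bp m q (j + 1) * F (j + 2)) := by
    intro j _
    rw [pascal_bp, hre]
    ring
  rw [Finset.sum_congr rfl hsplit, Finset.sum_add_distrib, ← Finset.mul_sum, ← Finset.mul_sum]
  have h2 : ∑ j ∈ range (m + 1), bp m q (j + 1) * F (j + 2)
      = (∑ k ∈ range (m + 1), bp m q k * F (k + 1)) - bp m q 0 * F 1 := by
    have hA := Finset.sum_range_succ' (fun k => bp m q k * F (k + 1)) (m + 1)
    have h3 : ∑ k ∈ range (m + 1 + 1), bp m q k * F (k + 1)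
        = ∑ k ∈ range (m + 1), bp m q k * F (k + 1) := by
      rw [Finset.sum_range_succ]
      have hz : bp m q (m + 1) = 0 := by unfold bp; rw [if_neg (by omega)]
      rw [hz]
      ring
    simp only [hre, Nat.zero_add] at hA
    linarith [hA, h3]
  have h0 : bp (m + 1) q 0 = (1 - q) * bp m q 0 := by
    unfold bp
    rw [if_pos (by omega), if_pos (by omega)]
    simp only [Nat.choose_zero_right, Nat.cast_one, pow_zero, Nat.sub_zero]
    rw [pow_succ]
    ring
  rw [h2, h0]
  simp only [Nat.zero_add]
  ring

lemma size_bias (q : ℝ) (m : ℕ) (F : ℕ → ℝ) :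
    ∑ k ∈ range (m + 2), bp (m + 1) q k * ((((m : ℝ) + 1) * q) * F (k + 1) - (k : ℝ) * F k)
      = ((m : ℝ) + 1) * q ^ 2 * ∑ j ∈ range (m + 1), bp m q j * (F (j + 2) - F (j + 1)) := by
  have hexp : ∑ k ∈ range (m + 2), bp (m + 1) q k * ((((m : ℝ) + 1) * q) * F (k + 1) - (k : ℝ) * F k)
      = (((m : ℝ) + 1) * q) * (∑ k ∈ range (m + 2), bp (m + 1) q k * F (k + 1))
        - ∑ k ∈ range (m + 2), bp (m + 1) q k * ((k : ℝ) * F k) := by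
    rw [Finset.mul_sum, ← Finset.sum_sub_distrib]
    exact Finset.sum_congr rfl fun k _ => by ring
  have hsub : ∑ j ∈ range (m + 1), bp m q j * (F (j + 2) - F (j + 1))
      = (∑ j ∈ range (m + 1), bp m q j * F (j + 2))
        - ∑ j ∈ range (m + 1), bp m q j * F (j + 1) := by
    rw [← Finset.sum_sub_distrib]
    exact Finset.sum_congr rfl fun k _ => by ring
  rw [hexp, claimB, claimA, hsub]
  ring

lemma tv_eq (b p : ℕ → ℝ) (N : ℕ) (hb : ∀ k, N < k → b k = 0) (hp : ∀ k, 0 ≤ p k)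
    (hps : Summable p) (hsum : ∑' k, b k = ∑' k, p k) :
    (1 / 2) * ∑' k, |b k - p k| = ∑ k ∈ range (N + 1), max (b k - p k) 0 := by
  have hbz : ∀ k ∉ range (N + 1), b k = 0 := fun k hk => hb k (by simp at hk; omega)
  have hbs : Summable b := summable_of_ne_finset_zero hbz
  have hmz : ∀ k ∉ range (N + 1), max (b k - p k) 0 = 0 := by
    intro k hk
    rw [hbz k hk]
    exact max_eq_right (by linarith [hp k])
  have hms : Summable (fun k => max (b k - p k) 0) := summable_of_ne_finset_zero hmz
  have hpt : ∀ k, |b k - p k| = (p k - b k) + 2 * max (b k - p k) 0 := by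
    intro k
    rcases le_total (b k) (p k) with h | h
    · rw [abs_of_nonpos (by linarith), max_eq_right (by linarith)]
      ring
    · rw [abs_of_nonneg (by linarith), max_eq_left (by linarith)]
      ring
  calc (1 / 2) * ∑' k, |b k - p k|
      = (1 / 2) * ∑' k, ((p k - b k) + 2 * max (b k - p k) 0) := by
        rw [tsum_congr hpt]
    _ = (1 / 2) * ((∑' k, (p k - b k)) + ∑' k, 2 * max (b k - p k) 0) := by
        rw [Summable.tsum_add (hps.sub hbs) (hms.mul_left 2)]
    _ = (1 / 2) * ((∑' k, p k) - (∑' k, b k) + 2 * ∑' k, max (b k - p k) 0) := by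
        rw [Summable.tsum_sub hps hbs, tsum_mul_left]
    _ = ∑' k, max (b k - p k) 0 := by rw [← hsum]; ring
    _ = ∑ k ∈ range (N + 1), max (b k - p k) 0 := tsum_eq_sum hmz


noncomputable def ppmf (l : ℝ) (k : ℕ) : ℝ := Real.exp (-l) * u l k

lemma ppmf_nonneg {l : ℝ} (hl : 0 ≤ l) (k : ℕ) : 0 ≤ ppmf l k :=
  mul_nonneg (Real.exp_pos _).le (u_nonneg hl k)

lemma summable_ppmf (l : ℝ) : Summable (ppmf l) := (summable_u l).mul_left _

lemma tsum_ppmf (l : ℝ) : ∑' k, ppmf l k = 1 := by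
  unfold ppmf
  rw [tsum_mul_left, ← exp_tsum, ← Real.exp_add]
  simp

lemma tsum_bp (q : ℝ) (ν : ℕ) : ∑' k, bp ν q k = 1 := by
  rw [tsum_eq_sum (s := range (ν + 1)) (fun k hk => by
    unfold bp; rw [if_neg (by simp at hk; omega)])]
  exact bp_sum q ν

end SteinChen

open SteinChen Finset in
theorem tv_binomial_poisson (n : ℕ) (q : ℝ) (hq0 : 0 ≤ q) (hq1 : q ≤ 1) :
    (1 / 2) * ∑' k : ℕ,
        |(if k ≤ n then (n.choose k : ℝ) * q ^ k * (1 - q) ^ (n - k) else 0) -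
          Real.exp (-(n * q)) * (n * q) ^ k / k.factorial| ≤
      min q (n * q ^ 2) := by
  classical
  rcases Nat.eq_zero_or_pos n with hn | hn
  · subst hn
    have h0 : ∀ k : ℕ,
        |(if k ≤ 0 then ((0:ℕ).choose k : ℝ) * q ^ k * (1 - q) ^ (0 - k) else 0) -
          Real.exp (-((0:ℕ) * q)) * (((0:ℕ) : ℝ) * q) ^ k / k.factorial| = 0 := by
      intro k
      cases k with
      | zero => norm_num
      | succ t => norm_num
    rw [tsum_congr h0, tsum_zero, mul_zero]
    exact le_min hq0 (by norm_num)
  rcases eq_or_lt_of_le hq0 with hq | hq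
  · -- q = 0
    have h0 : ∀ k : ℕ,
        |(if k ≤ n then (n.choose k : ℝ) * q ^ k * (1 - q) ^ (n - k) else 0) -
          Real.exp (-(n * q)) * ((n : ℝ) * q) ^ k / k.factorial| = 0 := by
      intro k
      rw [← hq]
      cases k with
      | zero => norm_num
      | succ t => norm_num
    rw [tsum_congr h0, tsum_zero, mul_zero]
    rw [← hq]
    norm_num
  -- main case
  obtain ⟨m, rfl⟩ : ∃ m, n = m + 1 := ⟨n - 1, by omega⟩
  set l : ℝ := ((m + 1 : ℕ) : ℝ) * q with hldef
  have hlpos : 0 < l := mul_pos (by exact_mod_cast Nat.succ_pos m) hq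
  have hbterm : ∀ k : ℕ,
      (if k ≤ m + 1 then (((m+1).choose k : ℝ)) * q ^ k * (1 - q) ^ (m + 1 - k) else 0) -
        Real.exp (-(((m + 1 : ℕ) : ℝ) * q)) * (((m + 1 : ℕ) : ℝ) * q) ^ k / k.factorial
      = bp (m + 1) q k - ppmf l k := by
    intro k
    unfold bp ppmf u
    rw [mul_div_assoc]
  rw [tsum_congr (fun k => congrArg abs (hbterm k))]
  have htv := tv_eq (bp (m + 1) q) (ppmf l) (m + 1)
    (fun k hk => by unfold bp; rw [if_neg (by omega)])
    (ppmf_nonneg hlpos.le) (summable_ppmf l)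
    (by rw [tsum_bp, tsum_ppmf])
  rw [htv]
  -- the "bad" set
  set A : Finset ℕ := (range (m + 1 + 1)).filter (fun k => ppmf l k < bp (m + 1) q k) with hA
  have hAsub : A ⊆ range (m + 1 + 1) := Finset.filter_subset _ _
  have h1 : ∑ k ∈ range (m + 1 + 1), max (bp (m + 1) q k - ppmf l k) 0
      = ∑ k ∈ A, (bp (m + 1) q k - ppmf l k) := by
    rw [hA, Finset.sum_filter]
    refine Finset.sum_congr rfl fun k _ => ?_
    split_ifs with h
    · exact max_eq_left (by linarith)
    · exact max_eq_right (by push_neg at h; linarith)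
  have h2 : RA l A 0 = ∑ k ∈ A, u l k := by
    unfold RA
    simp only [Nat.add_zero]
    rw [tsum_eq_sum (s := A) (fun k hk => by unfold iu; rw [if_neg hk])]
    exact Finset.sum_congr rfl fun k hk => by unfold iu; rw [if_pos hk]
  have hPA : ∑ k ∈ A, ppmf l k = Real.exp (-l) * RA l A 0 := by
    rw [h2, Finset.mul_sum]
    rfl
  have h3 : ∑ k ∈ A, (bp (m + 1) q k - ppmf l k)
      = ∑ k ∈ range (m + 1 + 1), bp (m + 1) q k *
          ((if k ∈ A then (1:ℝ) else 0) - Real.exp (-l) * RA l A 0) := by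
    have e1 : ∑ k ∈ range (m + 1 + 1), bp (m + 1) q k *
        ((if k ∈ A then (1:ℝ) else 0) - Real.exp (-l) * RA l A 0)
        = (∑ k ∈ range (m + 1 + 1), (if k ∈ A then bp (m + 1) q k else 0))
          - (∑ k ∈ range (m + 1 + 1), bp (m + 1) q k) * (Real.exp (-l) * RA l A 0) := by
      rw [Finset.sum_mul, ← Finset.sum_sub_distrib]
      refine Finset.sum_congr rfl fun k _ => ?_
      split_ifs <;> ring
    rw [e1, Finset.sum_ite_mem, Finset.inter_eq_right.mpr hAsub, bp_sum, one_mul,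
      Finset.sum_sub_distrib, hPA]
  have h4 : ∑ k ∈ range (m + 1 + 1), bp (m + 1) q k *
        ((if k ∈ A then (1:ℝ) else 0) - Real.exp (-l) * RA l A 0)
      = ∑ k ∈ range (m + 1 + 1), bp (m + 1) q k * (l * f l A (k + 1) - k * f l A k) :=
    Finset.sum_congr rfl fun k _ => by rw [← stein_eq hlpos A k]
  have hlcast : l = ((m : ℝ) + 1) * q := by rw [hldef]; push_cast; ring
  have h5 : ∑ k ∈ range (m + 2), bp (m + 1) q k * (l * f l A (k + 1) - k * f l A k)
      = ((m : ℝ) + 1) * q ^ 2 *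
          ∑ j ∈ range (m + 1), bp m q j * (f l A (j + 2) - f l A (j + 1)) := by
    have hs := size_bias q m (f l A)
    rw [← hlcast] at hs
    exact hs
  have h6 : ∑ j ∈ range (m + 1), bp m q j * (f l A (j + 2) - f l A (j + 1))
      ≤ (1 - Real.exp (-l)) / l := by
    calc ∑ j ∈ range (m + 1), bp m q j * (f l A (j + 2) - f l A (j + 1))
        ≤ ∑ j ∈ range (m + 1), bp m q j * ((1 - Real.exp (-l)) / l) := by
          refine Finset.sum_le_sum fun j _ => ?_
          refine mul_le_mul_of_nonneg_left ?_ (bp_nonneg hq0 hq1 m j)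
          exact (le_abs_self _).trans (delta_bound hlpos A j)
      _ = (1 - Real.exp (-l)) / l := by rw [← Finset.sum_mul, bp_sum, one_mul]
  have hcoef : (0:ℝ) ≤ ((m : ℝ) + 1) * q ^ 2 := by positivity
  rw [h1, h3, h4]
  refine le_trans (le_of_eq h5) ?_
  have hfinal : ((m : ℝ) + 1) * q ^ 2 *
      (∑ j ∈ range (m + 1), bp m q j * (f l A (j + 2) - f l A (j + 1)))
      ≤ ((m : ℝ) + 1) * q ^ 2 * ((1 - Real.exp (-l)) / l) :=
    mul_le_mul_of_nonneg_left h6 hcoef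
  refine hfinal.trans (le_min ?_ ?_)
  · -- ≤ q
    have hexp : (1 - Real.exp (-l)) ≤ 1 := by linarith [Real.exp_pos (-l)]
    have hdiv : (1 - Real.exp (-l)) / l ≤ 1 / l := by
      rw [div_le_div_iff₀ hlpos hlpos]
      nlinarith [Real.exp_pos (-l)]
    calc ((m : ℝ) + 1) * q ^ 2 * ((1 - Real.exp (-l)) / l)
        ≤ ((m : ℝ) + 1) * q ^ 2 * (1 / l) := mul_le_mul_of_nonneg_left hdiv hcoef
      _ = q := by
          rw [hlcast]
          field_simp
  · -- ≤ n q^2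
    have hexp2 : 1 - Real.exp (-l) ≤ l := by nlinarith [Real.add_one_le_exp (-l)]
    have hdiv : (1 - Real.exp (-l)) / l ≤ 1 := by
      rw [div_le_one hlpos]; exact hexp2
    have := mul_le_of_le_one_right hcoef hdiv
    calc ((m : ℝ) + 1) * q ^ 2 * ((1 - Real.exp (-l)) / l)
        ≤ ((m : ℝ) + 1) * q ^ 2 := this
      _ = ((m + 1 : ℕ) : ℝ) * q ^ 2 := by push_cast; ring
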